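/- For a square-summable sequence φ: ℤ² → ℂ, we have ‖φ‖_{ℓ∞(ℤ²)}⁴ ≤ ‖D₂D₁φ‖_{ℓ²(ℤ²)} · ‖D₁φ‖_{ℓ²(ℤ²)} · ‖D₂φ‖_{ℓ²(ℤ²)} · ‖φ‖_{ℓ²(ℤ²)}. -/

import Mathlib

noncomputable section

open Filter Topology

/-- Partial difference in the first coordinate on ℤ². -/
def D1 (φ : ℤ × ℤ → ℂ) : ℤ × ℤ → ℂ := fun p => φ (p.1 + 1, p.2) - φ p

/-- Partial difference in the second coordinate on ℤ². -/
def D2 (φ : ℤ × ℤ → ℂ) : ℤ × ℤ → ℂ := fun p => φ (p.1, p.2 + 1) - φ p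

/-- The ℓ²(ℤ²) norm. -/
def l2 (φ : ℤ × ℤ → ℂ) : ℝ := Real.sqrt (∑' p : ℤ × ℤ, ‖φ p‖ ^ 2)

namespace AgmonAux

lemma sq_abs_sub_le (a b : ℂ) : |‖a‖ ^ 2 - ‖b‖ ^ 2| ≤ (‖a‖ + ‖b‖) * ‖a - b‖ := by
  have h1 : |‖a‖ - ‖b‖| ≤ ‖a - b‖ := abs_norm_sub_norm_le a b
  have h2 : ‖a‖ ^ 2 - ‖b‖ ^ 2 = (‖a‖ + ‖b‖) * (‖a‖ - ‖b‖) := by ring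
  rw [h2, abs_mul, abs_of_nonneg (by positivity)]
  exact mul_le_mul_of_nonneg_left h1 (by positivity)

lemma summable_mul_of_sq {ι : Type*} {a b : ι → ℝ} (ha0 : ∀ i, 0 ≤ a i) (hb0 : ∀ i, 0 ≤ b i)
    (ha : Summable fun i => a i ^ 2) (hb : Summable fun i => b i ^ 2) :
    Summable fun i => a i * b i := by
  refine Summable.of_nonneg_of_le (fun i => mul_nonneg (ha0 i) (hb0 i)) (fun i => ?_) (ha.add hb)
  nlinarith [sq_nonneg (a i - b i)]

lemma summable_add_sq {ι : Type*} {a b : ι → ℝ} (ha : Summable fun i => a i ^ 2)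
    (hb : Summable fun i => b i ^ 2) : Summable fun i => (a i + b i) ^ 2 := by
  refine Summable.of_nonneg_of_le (fun i => sq_nonneg _) (fun i => ?_) (((ha.add hb)).mul_left 2)
  nlinarith [sq_nonneg (a i - b i)]

lemma abs_tsum_le' {ι : Type*} (f : ι → ℝ) (h : Summable fun i => |f i|) :
    |∑' i, f i| ≤ ∑' i, |f i| := by
  simpa using norm_tsum_le_tsum_norm (f := f) (by simpa using h)

lemma cs_tsum {ι : Type*} (a b : ι → ℝ) (ha0 : ∀ i, 0 ≤ a i) (hb0 : ∀ i, 0 ≤ b i)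
    (ha : Summable fun i => a i ^ 2) (hb : Summable fun i => b i ^ 2) :
    ∑' i, a i * b i ≤ Real.sqrt (∑' i, a i ^ 2) * Real.sqrt (∑' i, b i ^ 2) := by
  refine Summable.tsum_le_of_sum_le (summable_mul_of_sq ha0 hb0 ha hb) fun s => ?_
  calc ∑ i ∈ s, a i * b i
      ≤ Real.sqrt (∑ i ∈ s, a i ^ 2) * Real.sqrt (∑ i ∈ s, b i ^ 2) :=
        Real.sum_mul_le_sqrt_mul_sqrt s a b
    _ ≤ _ := by
        have h1 := Real.sqrt_le_sqrt (ha.sum_le_tsum s (fun i _ => sq_nonneg _))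
        have h2 := Real.sqrt_le_sqrt (hb.sum_le_tsum s (fun i _ => sq_nonneg _))
        exact mul_le_mul h1 h2 (Real.sqrt_nonneg _) (Real.sqrt_nonneg _)

lemma telescope (F : ℤ → ℝ) {L m : ℤ} (h : L ≤ m) :
    F m - F L = ∑ k ∈ Finset.Ico L m, (F (k + 1) - F k) := by
  refine Int.le_induction
    (motive := fun j _ => F j - F L = ∑ k ∈ Finset.Ico L j, (F (k + 1) - F k)) (by simp)
    (fun n hn ih => ?_) m h
  have hins : Finset.Ico L (n + 1) = insert n (Finset.Ico L n) := by
    ext x; simp only [Finset.mem_Ico, Finset.mem_insert]; omega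
  rw [hins, Finset.sum_insert (by simp)]
  linarith

lemma agmon_real (F H : ℤ → ℝ) (hF : Summable F) (hH : Summable H) (hH0 : ∀ k, 0 ≤ H k)
    (hbound : ∀ k, |F (k + 1) - F k| ≤ H k) (m : ℤ) :
    2 * F m ≤ ∑' k, H k := by
  have key : ∀ L R : ℤ, L ≤ m → m ≤ R → 2 * F m ≤ F L + F R + ∑' k, H k := by
    intro L R hL hR
    have h1 := telescope F hL
    have h2 := telescope F hR
    have b1 : F m - F L ≤ ∑ k ∈ Finset.Ico L m, H k := by
      rw [h1]
      exact Finset.sum_le_sum fun k _ => (le_abs_self _).trans (hbound k)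
    have b2 : F m - F R ≤ ∑ k ∈ Finset.Ico m R, H k := by
      have : F m - F R = ∑ k ∈ Finset.Ico m R, (-(F (k + 1) - F k)) := by
        rw [Finset.sum_neg_distrib, ← h2]; ring
      rw [this]
      exact Finset.sum_le_sum fun k _ => (neg_le_abs _).trans (hbound k)
    have hun : ∑ k ∈ Finset.Ico L m, H k + ∑ k ∈ Finset.Ico m R, H k
        = ∑ k ∈ Finset.Ico L R, H k := by
      rw [← Finset.sum_union (Finset.Ico_disjoint_Ico_consecutive L m R),
        Finset.Ico_union_Ico_eq_Ico hL hR]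
    have hts : ∑ k ∈ Finset.Ico L R, H k ≤ ∑' k, H k :=
      hH.sum_le_tsum _ (fun k _ => hH0 k)
    linarith
  have hcof := hF.tendsto_cofinite_zero
  rw [Int.cofinite_eq] at hcof
  have hbot : Tendsto F atBot (𝓝 0) := hcof.mono_left le_sup_left
  have htop : Tendsto F atTop (𝓝 0) := hcof.mono_left le_sup_right
  have hL : Tendsto (fun n : ℕ => m - (n : ℤ)) atTop atBot := by
    apply tendsto_atBot_add_const_left
    exact (tendsto_neg_atBot_iff.mpr tendsto_natCast_atTop_atTop)
  have hR : Tendsto (fun n : ℕ => m + (n : ℤ)) atTop atTop := by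
    apply tendsto_atTop_add_const_left
    exact tendsto_natCast_atTop_atTop
  have hseq : Tendsto (fun n : ℕ => F (m - n) + F (m + n) + ∑' k, H k) atTop
      (𝓝 (0 + 0 + ∑' k, H k)) :=
    (((hbot.comp hL).add (htop.comp hR)).add tendsto_const_nhds)
  have : 2 * F m ≤ 0 + 0 + ∑' k, H k := by
    refine ge_of_tendsto hseq (Eventually.of_forall fun n => ?_)
    exact key (m - n) (m + n) (by omega) (by omega)
  linarith

lemma summable_shift1 {φ : ℤ × ℤ → ℂ} (h : Summable fun p : ℤ × ℤ => ‖φ p‖ ^ 2) :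
    Summable fun p : ℤ × ℤ => ‖φ (p.1 + 1, p.2)‖ ^ 2 := by
  have hi : Function.Injective (fun p : ℤ × ℤ => (p.1 + 1, p.2) : ℤ × ℤ → ℤ × ℤ) := by
    intro p q hpq
    simp only [Prod.ext_iff] at hpq ⊢
    omega
  exact h.comp_injective hi

lemma tsum_shift1 (φ : ℤ × ℤ → ℂ) :
    ∑' p : ℤ × ℤ, ‖φ (p.1 + 1, p.2)‖ ^ 2 = ∑' p : ℤ × ℤ, ‖φ p‖ ^ 2 := by
  have := ((Equiv.addRight (1 : ℤ)).prodCongr (Equiv.refl ℤ)).tsum_eq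
    (fun p : ℤ × ℤ => ‖φ p‖ ^ 2)
  simpa [Equiv.prodCongr, Prod.map] using this

lemma summable_D1 {φ : ℤ × ℤ → ℂ} (h : Summable fun p : ℤ × ℤ => ‖φ p‖ ^ 2) :
    Summable fun p : ℤ × ℤ => ‖D1 φ p‖ ^ 2 := by
  refine Summable.of_nonneg_of_le (fun p => sq_nonneg _) (fun p => ?_)
    (((summable_shift1 h).add h).mul_left 2)
  have hle := norm_sub_le (φ (p.1 + 1, p.2)) (φ p)
  have hsq := pow_le_pow_left₀ (norm_nonneg _) hle 2
  simp only [D1] at *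
  nlinarith [sq_nonneg (‖φ (p.1 + 1, p.2)‖ - ‖φ p‖)]

lemma summable_shift2 {φ : ℤ × ℤ → ℂ} (h : Summable fun p : ℤ × ℤ => ‖φ p‖ ^ 2) :
    Summable fun p : ℤ × ℤ => ‖φ (p.1, p.2 + 1)‖ ^ 2 := by
  have hi : Function.Injective (fun p : ℤ × ℤ => (p.1, p.2 + 1) : ℤ × ℤ → ℤ × ℤ) := by
    intro p q hpq
    simp only [Prod.ext_iff] at hpq ⊢
    omega
  exact h.comp_injective hi

lemma summable_D2 {φ : ℤ × ℤ → ℂ} (h : Summable fun p : ℤ × ℤ => ‖φ p‖ ^ 2) :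
    Summable fun p : ℤ × ℤ => ‖D2 φ p‖ ^ 2 := by
  refine Summable.of_nonneg_of_le (fun p => sq_nonneg _) (fun p => ?_)
    (((summable_shift2 h).add h).mul_left 2)
  have hle := norm_sub_le (φ (p.1, p.2 + 1)) (φ p)
  have hsq := pow_le_pow_left₀ (norm_nonneg _) hle 2
  simp only [D2] at *
  nlinarith [sq_nonneg (‖φ (p.1, p.2 + 1)‖ - ‖φ p‖)]

/-- Row bound: for each row `m`, the squared ℓ² norm of the row is at most
`l2 (D1 ψ) * l2 ψ`. -/
lemma row_le (ψ : ℤ × ℤ → ℂ) (hψ : Summable fun p : ℤ × ℤ => ‖ψ p‖ ^ 2) (m : ℤ) :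
    (∑' n : ℤ, ‖ψ (m, n)‖ ^ 2) ≤ l2 (D1 ψ) * l2 ψ := by
  have hD := summable_D1 hψ
  have hSh := summable_shift1 hψ
  let F : ℤ → ℝ := fun k => ∑' n : ℤ, ‖ψ (k, n)‖ ^ 2
  let H : ℤ → ℝ := fun k => ∑' n : ℤ, (‖ψ (k + 1, n)‖ + ‖ψ (k, n)‖) * ‖D1 ψ (k, n)‖
  have hF : Summable F := hψ.prod
  -- the 2D function underlying H
  let P : ℤ × ℤ → ℝ := fun p => (‖ψ (p.1 + 1, p.2)‖ + ‖ψ p‖) * ‖D1 ψ p‖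
  have hP : Summable P :=
    summable_mul_of_sq (fun p => by positivity) (fun p => norm_nonneg _)
      (summable_add_sq hSh hψ) hD
  have hH : Summable H := hP.prod
  have hH0 : ∀ k, 0 ≤ H k := fun k => tsum_nonneg fun n => by positivity
  have hbound : ∀ k, |F (k + 1) - F k| ≤ H k := by
    intro k
    have hrow1 : Summable fun n : ℤ => ‖ψ (k + 1, n)‖ ^ 2 := hψ.prod_factor (k + 1)
    have hrow0 : Summable fun n : ℤ => ‖ψ (k, n)‖ ^ 2 := hψ.prod_factor k
    have hdiff : F (k + 1) - F k = ∑' n : ℤ, (‖ψ (k + 1, n)‖ ^ 2 - ‖ψ (k, n)‖ ^ 2) :=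
      (hrow1.tsum_sub hrow0).symm
    have hdsum : Summable fun n : ℤ => ‖ψ (k + 1, n)‖ ^ 2 - ‖ψ (k, n)‖ ^ 2 := hrow1.sub hrow0
    have habs : Summable fun n : ℤ => |‖ψ (k + 1, n)‖ ^ 2 - ‖ψ (k, n)‖ ^ 2| := hdsum.abs
    have hHrow : Summable fun n : ℤ => (‖ψ (k + 1, n)‖ + ‖ψ (k, n)‖) * ‖D1 ψ (k, n)‖ :=
      hP.prod_factor k
    rw [hdiff]
    calc |∑' n : ℤ, (‖ψ (k + 1, n)‖ ^ 2 - ‖ψ (k, n)‖ ^ 2)|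
        ≤ ∑' n : ℤ, |‖ψ (k + 1, n)‖ ^ 2 - ‖ψ (k, n)‖ ^ 2| := by
          exact abs_tsum_le' _ habs
      _ ≤ H k := by
          refine habs.tsum_le_tsum (fun n => ?_) hHrow
          have : D1 ψ (k, n) = ψ (k + 1, n) - ψ (k, n) := rfl
          rw [this]
          exact sq_abs_sub_le _ _
  have hmain := agmon_real F H hF hH hH0 hbound m
  -- bound ∑' H
  have hHsum : ∑' k, H k ≤ 2 * (l2 (D1 ψ) * l2 ψ) := by
    have hsplit : ∀ p : ℤ × ℤ, P p
        = ‖ψ (p.1 + 1, p.2)‖ * ‖D1 ψ p‖ + ‖ψ p‖ * ‖D1 ψ p‖ := fun p => by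
      simp only [P]; ring
    have hs1 : Summable fun p : ℤ × ℤ => ‖ψ (p.1 + 1, p.2)‖ * ‖D1 ψ p‖ :=
      summable_mul_of_sq (fun p => norm_nonneg _) (fun p => norm_nonneg _) hSh hD
    have hs2 : Summable fun p : ℤ × ℤ => ‖ψ p‖ * ‖D1 ψ p‖ :=
      summable_mul_of_sq (fun p => norm_nonneg _) (fun p => norm_nonneg _) hψ hD
    have hPH : ∑' k, H k = ∑' p : ℤ × ℤ, P p := hP.tsum_prod.symm
    rw [hPH]
    calc ∑' p : ℤ × ℤ, P p
        = (∑' p : ℤ × ℤ, ‖ψ (p.1 + 1, p.2)‖ * ‖D1 ψ p‖)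
          + ∑' p : ℤ × ℤ, ‖ψ p‖ * ‖D1 ψ p‖ := by
          rw [← hs1.tsum_add hs2]
          exact tsum_congr hsplit
      _ ≤ Real.sqrt (∑' p : ℤ × ℤ, ‖ψ (p.1 + 1, p.2)‖ ^ 2)
            * Real.sqrt (∑' p : ℤ × ℤ, ‖D1 ψ p‖ ^ 2)
          + Real.sqrt (∑' p : ℤ × ℤ, ‖ψ p‖ ^ 2)
            * Real.sqrt (∑' p : ℤ × ℤ, ‖D1 ψ p‖ ^ 2) := by
          gcongr
          · exact cs_tsum _ _ (fun p => norm_nonneg _) (fun p => norm_nonneg _) hSh hD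
          · exact cs_tsum _ _ (fun p => norm_nonneg _) (fun p => norm_nonneg _) hψ hD
      _ = 2 * (l2 (D1 ψ) * l2 ψ) := by
          rw [tsum_shift1]
          simp only [l2]
          ring
  linarith

/-- 1D Agmon inequality on ℤ. -/
lemma agmon_1d (f : ℤ → ℂ) (hf : Summable fun n : ℤ => ‖f n‖ ^ 2)
    (hdf : Summable fun n : ℤ => ‖f (n + 1) - f n‖ ^ 2) (m : ℤ) :
    ‖f m‖ ^ 2 ≤ Real.sqrt (∑' k : ℤ, ‖f (k + 1) - f k‖ ^ 2)
      * Real.sqrt (∑' k : ℤ, ‖f k‖ ^ 2) := by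
  have hsh : Summable fun n : ℤ => ‖f (n + 1)‖ ^ 2 := by
    exact hf.comp_injective (add_left_injective (1 : ℤ))
  let F : ℤ → ℝ := fun n => ‖f n‖ ^ 2
  let H : ℤ → ℝ := fun k => (‖f (k + 1)‖ + ‖f k‖) * ‖f (k + 1) - f k‖
  have hH : Summable H :=
    summable_mul_of_sq (fun k => by positivity) (fun k => norm_nonneg _)
      (summable_add_sq hsh hf) hdf
  have hH0 : ∀ k, 0 ≤ H k := fun k => by positivity
  have hbound : ∀ k, |F (k + 1) - F k| ≤ H k := fun k => sq_abs_sub_le _ _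
  have hmain := agmon_real F H hf hH hH0 hbound m
  have hshift_eq : ∑' n : ℤ, ‖f (n + 1)‖ ^ 2 = ∑' n : ℤ, ‖f n‖ ^ 2 :=
    (Equiv.addRight (1 : ℤ)).tsum_eq (fun n => ‖f n‖ ^ 2)
  have hs1 : Summable fun k : ℤ => ‖f (k + 1)‖ * ‖f (k + 1) - f k‖ :=
    summable_mul_of_sq (fun k => norm_nonneg _) (fun k => norm_nonneg _) hsh hdf
  have hs2 : Summable fun k : ℤ => ‖f k‖ * ‖f (k + 1) - f k‖ :=
    summable_mul_of_sq (fun k => norm_nonneg _) (fun k => norm_nonneg _) hf hdf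
  have hHsum : ∑' k, H k ≤ 2 * (Real.sqrt (∑' k : ℤ, ‖f (k + 1) - f k‖ ^ 2)
      * Real.sqrt (∑' k : ℤ, ‖f k‖ ^ 2)) := by
    calc ∑' k, H k
        = (∑' k : ℤ, ‖f (k + 1)‖ * ‖f (k + 1) - f k‖)
          + ∑' k : ℤ, ‖f k‖ * ‖f (k + 1) - f k‖ := by
          rw [← hs1.tsum_add hs2]
          exact tsum_congr fun k => by simp only [H]; ring
      _ ≤ Real.sqrt (∑' k : ℤ, ‖f (k + 1)‖ ^ 2)
            * Real.sqrt (∑' k : ℤ, ‖f (k + 1) - f k‖ ^ 2)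
          + Real.sqrt (∑' k : ℤ, ‖f k‖ ^ 2)
            * Real.sqrt (∑' k : ℤ, ‖f (k + 1) - f k‖ ^ 2) := by
          gcongr
          · exact cs_tsum _ _ (fun k => norm_nonneg _) (fun k => norm_nonneg _) hsh hdf
          · exact cs_tsum _ _ (fun k => norm_nonneg _) (fun k => norm_nonneg _) hf hdf
      _ = _ := by rw [hshift_eq]; ring
  calc ‖f m‖ ^ 2 = F m := rfl
    _ ≤ _ := by linarith

end AgmonAux

open AgmonAux in
/-- 2D product estimate from the Agmon–Cauchy inequality. -/
theorem agmon_2d_product (φ : ℤ × ℤ → ℂ) (h : Summable fun p : ℤ × ℤ => ‖φ p‖ ^ 2) :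
    (⨆ p : ℤ × ℤ, ‖φ p‖) ^ 4 ≤ l2 (D2 (D1 φ)) * l2 (D1 φ) * l2 (D2 φ) * l2 φ := by
  have hD1 : Summable fun p : ℤ × ℤ => ‖D1 φ p‖ ^ 2 := summable_D1 h
  have hD2 : Summable fun p : ℤ × ℤ => ‖D2 φ p‖ ^ 2 := summable_D2 h
  have hcomm : D1 (D2 φ) = D2 (D1 φ) := by
    funext p
    simp only [D1, D2]
    ring
  set T : ℝ := l2 (D2 (D1 φ)) * l2 (D1 φ) * l2 (D2 φ) * l2 φ with hTdef
  have hl2nonneg : ∀ ψ : ℤ × ℤ → ℂ, 0 ≤ l2 ψ := fun ψ => Real.sqrt_nonneg _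
  have hT0 : 0 ≤ T := by
    apply mul_nonneg (mul_nonneg (mul_nonneg _ _) _) <;> exact hl2nonneg _
  -- pointwise bound
  have hpt : ∀ p : ℤ × ℤ, ‖φ p‖ ^ 4 ≤ T := by
    rintro ⟨m, n⟩
    have hrowf : Summable fun j : ℤ => ‖φ (m, j)‖ ^ 2 := h.prod_factor m
    have hrowd : Summable fun j : ℤ => ‖φ (m, j + 1) - φ (m, j)‖ ^ 2 := by
      have := hD2.prod_factor m
      simpa [D2] using this
    have h1d := agmon_1d (fun j => φ (m, j)) hrowf hrowd n
    set G : ℝ := ∑' k : ℤ, ‖φ (m, k + 1) - φ (m, k)‖ ^ 2 with hGdef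
    set F : ℝ := ∑' k : ℤ, ‖φ (m, k)‖ ^ 2 with hFdef
    have hG0 : 0 ≤ G := tsum_nonneg fun k => sq_nonneg _
    have hF0 : 0 ≤ F := tsum_nonneg fun k => sq_nonneg _
    have hFle : F ≤ l2 (D1 φ) * l2 φ := row_le φ h m
    have hGle : G ≤ l2 (D2 (D1 φ)) * l2 (D2 φ) := by
      have := row_le (D2 φ) hD2 m
      rw [hcomm] at this
      calc G = ∑' k : ℤ, ‖D2 φ (m, k)‖ ^ 2 := by
            refine tsum_congr fun k => ?_
            simp [D2]
        _ ≤ _ := this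
    have hsq : ‖φ (m, n)‖ ^ 2 ≤ Real.sqrt G * Real.sqrt F := h1d
    have h4 : ‖φ (m, n)‖ ^ 4 ≤ G * F := by
      calc ‖φ (m, n)‖ ^ 4 = (‖φ (m, n)‖ ^ 2) ^ 2 := by ring
        _ ≤ (Real.sqrt G * Real.sqrt F) ^ 2 := by
            apply pow_le_pow_left₀ (sq_nonneg _) hsq
        _ = G * F := by
            rw [mul_pow, Real.sq_sqrt hG0, Real.sq_sqrt hF0]
    calc ‖φ (m, n)‖ ^ 4 ≤ G * F := h4
      _ ≤ (l2 (D2 (D1 φ)) * l2 (D2 φ)) * (l2 (D1 φ) * l2 φ) := by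
          apply mul_le_mul hGle hFle hF0
          exact mul_nonneg (hl2nonneg _) (hl2nonneg _)
      _ = T := by rw [hTdef]; ring
  -- supremum step
  set C : ℝ := T ^ ((1 : ℝ) / 4) with hCdef
  have hptC : ∀ p : ℤ × ℤ, ‖φ p‖ ≤ C := by
    intro p
    have h1 : ‖φ p‖ = (‖φ p‖ ^ 4) ^ ((1 : ℝ) / 4) := by
      rw [← Real.rpow_natCast (‖φ p‖) 4, ← Real.rpow_mul (norm_nonneg _)]
      norm_num
    rw [h1, hCdef]
    exact Real.rpow_le_rpow (by positivity) (hpt p) (by norm_num)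
  have hbdd : BddAbove (Set.range fun p : ℤ × ℤ => ‖φ p‖) :=
    ⟨C, by rintro x ⟨p, rfl⟩; exact hptC p⟩
  have hsupC : (⨆ p : ℤ × ℤ, ‖φ p‖) ≤ C := ciSup_le hptC
  have hsup0 : 0 ≤ ⨆ p : ℤ × ℤ, ‖φ p‖ :=
    le_trans (norm_nonneg (φ (0, 0))) (le_ciSup hbdd (0, 0))
  have hC4 : C ^ 4 = T := by
    rw [hCdef, ← Real.rpow_natCast (T ^ ((1 : ℝ) / 4)) 4, ← Real.rpow_mul hT0]
    norm_num
  calc (⨆ p : ℤ × ℤ, ‖φ p‖) ^ 4 ≤ C ^ 4 := pow_le_pow_left₀ hsup0 hsupC 4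
    _ = T := hC4
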